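/- Let n ≥ 2, let d with 1 ≤ d ≤ n, let m ≥ 1 be a common divisor of n and d, and let q ≥ 2. Then |GL(d,q)| / |GL(d/m, q^m)| ≥ q^{d(d-1)(m-1)/m}, where |GL(k,r)| = ∏_{j=0}^{k-1}(r^k - r^j). -/

import Mathlib

/-- The order of the general linear group `GL(k, 𝔽_r)`: `∏_{j=0}^{k-1} (r^k - r^j)`. -/
def cardGL (k r : ℕ) : ℕ := ∏ j ∈ Finset.range k, (r ^ k - r ^ j)

lemma cardGL_pos (k r : ℕ) (hr : 2 ≤ r) : 0 < cardGL k r := by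
  unfold cardGL
  apply Finset.prod_pos
  intro j hj
  have : r ^ j < r ^ k := Nat.pow_lt_pow_right (by omega) (Finset.mem_range.mp hj)
  omega

/-- For `2 ≤ n`, `1 ≤ d ≤ n`, `m ≥ 1` a common divisor of `n` and `d`, and `q ≥ 2`,
`|GL(d,q)| / |GL(d/m, q^m)| ≥ q^{d(d-1)(m-1)/m}`. -/
theorem stmt_6 (n d m q : ℕ) (hn : 2 ≤ n) (hd1 : 1 ≤ d) (hdn : d ≤ n)
    (hm : 1 ≤ m) (hmn : m ∣ n) (hmd : m ∣ d) (hq : 2 ≤ q) :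
    (q : ℝ) ^ ((d / m) * (d - 1) * (m - 1)) ≤
      (cardGL d q : ℝ) / (cardGL (d / m) (q ^ m) : ℝ) := by
  set e := d / m with he
  have hde : m * e = d := Nat.mul_div_cancel' hmd
  have hm0 : 0 < m := hm
  have he1 : 1 ≤ e := Nat.one_le_div_iff hm0 |>.mpr (Nat.le_of_dvd (by omega) hmd)
  set T : Finset ℕ := (Finset.range e).image (fun j => m * j) with hT
  have hinj : Set.InjOn (fun j => m * j) (Finset.range e) := fun a _ b _ h => by
    exact Nat.eq_of_mul_eq_mul_left hm0 h
  have hsub : T ⊆ Finset.range d := by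
    intro x hx
    simp only [hT, Finset.mem_image, Finset.mem_range] at hx ⊢
    obtain ⟨j, hj, rfl⟩ := hx
    calc m * j < m * e := (Nat.mul_lt_mul_left hm0).mpr hj
      _ = d := hde
  have hTcard : T.card = e := by
    rw [hT, Finset.card_image_of_injOn hinj, Finset.card_range]
  -- the denominator equals the product over T
  have hden : cardGL e (q ^ m) = ∏ j ∈ T, (q ^ d - q ^ j) := by
    rw [hT, Finset.prod_image hinj]
    unfold cardGL
    apply Finset.prod_congr rfl
    intro j hj
    rw [← pow_mul, ← pow_mul, hde]
  -- split the numerator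
  have hsplit : cardGL d q =
      (∏ j ∈ Finset.range d \ T, (q ^ d - q ^ j)) * cardGL e (q ^ m) := by
    rw [hden]
    exact (Finset.prod_sdiff hsub).symm
  -- bound the complement product
  have hcardc : (Finset.range d \ T).card = d - e := by
    rw [Finset.card_sdiff_of_subset hsub, Finset.card_range, hTcard]
  have hbound : q ^ ((d - 1) * (d - e)) ≤ ∏ j ∈ Finset.range d \ T, (q ^ d - q ^ j) := by
    calc q ^ ((d - 1) * (d - e)) = ∏ _j ∈ Finset.range d \ T, q ^ (d - 1) := by
          rw [Finset.prod_const, hcardc, ← pow_mul]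
      _ ≤ _ := by
          apply Finset.prod_le_prod (fun _ _ => Nat.zero_le _)
          intro j hj
          have hjd : j < d := Finset.mem_range.mp (Finset.mem_sdiff.mp hj).1
          have h1 : q ^ j ≤ q ^ (d - 1) := Nat.pow_le_pow_right (by omega) (by omega)
          have h2 : q ^ (d - 1) * 2 ≤ q ^ d := by
            have : q ^ d = q ^ (d - 1) * q := by
              rw [← pow_succ]; congr 1; omega
            nlinarith [pow_pos (show 0 < q by omega) (d-1)]
          omega
  -- exponent arithmetic
  have hsub1 : e * (m - 1) + e = d := by
    have hmm : (m - 1) + 1 = m := by omega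
    calc e * (m - 1) + e = e * ((m - 1) + 1) := by ring
      _ = e * m := by rw [hmm]
      _ = d := by rw [mul_comm, hde]
  have hexp : (d - 1) * (d - e) = e * (d - 1) * (m - 1) := by
    have : d - e = e * (m - 1) := by omega
    rw [this]; ring
  -- conclude over ℝ
  have hdpos : (0 : ℝ) < (cardGL e (q ^ m) : ℝ) := by
    exact_mod_cast cardGL_pos e (q ^ m) (by
      calc 2 ≤ q := hq
        _ = q ^ 1 := (pow_one q).symm
        _ ≤ q ^ m := Nat.pow_le_pow_right (by omega) hm)
  rw [hsplit]
  push_cast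
  rw [mul_div_assoc, div_self (ne_of_gt hdpos), mul_one]
  calc (q : ℝ) ^ (e * (d - 1) * (m - 1)) = (q : ℝ) ^ ((d - 1) * (d - e)) := by rw [hexp]
    _ ≤ _ := by exact_mod_cast hbound
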